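/- For every integer n ≥ 1, the limit as t → 0⁺ of −t · R_n'(t) / R_n(t) equals 2n − 1. -/

import Mathlib

open MeasureTheory Real Finset

/-- `R n x` is the remainder of the asymptotic expansion of `log Γ`. -/
noncomputable def R (n : ℕ) (x : ℝ) : ℝ :=
  (-1 : ℝ) ^ n * (Real.log (Real.Gamma x) - (x - 1/2) * Real.log x + x
    - (1/2) * Real.log (2 * π)
    - ∑ k ∈ Finset.Icc 1 n,
        ((bernoulli (2*k) : ℚ) : ℝ) / ((2*(k:ℝ)) * (2*(k:ℝ) - 1)) * x ^ (1 - 2*(k:ℤ)))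

open Filter Topology Set

noncomputable def psi (s : ℝ) : ℝ := deriv Real.Gamma s / Real.Gamma s

lemma diffGamma {t : ℝ} (ht : 0 < t) : DifferentiableAt ℝ Real.Gamma t :=
  Real.differentiableAt_Gamma fun m => ((neg_nonpos.mpr m.cast_nonneg).trans_lt ht).ne'

lemma hasDerivAt_logGamma {t : ℝ} (ht : 0 < t) :
    HasDerivAt (fun x => Real.log (Real.Gamma x)) (psi t) t :=
  ((diffGamma ht).hasDerivAt).log (Real.Gamma_pos_of_pos ht).ne'

lemma psi_mono {a b : ℝ} (ha : 0 < a) (hab : a ≤ b) : psi a ≤ psi b := by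
  rcases eq_or_lt_of_le hab with rfl | hab
  · exact le_refl _
  have hb : 0 < b := ha.trans hab
  have hda : deriv (Real.log ∘ Real.Gamma) a = psi a := by
    rw [Function.comp_def]; exact (hasDerivAt_logGamma ha).deriv
  have hdb : deriv (Real.log ∘ Real.Gamma) b = psi b := by
    rw [Function.comp_def]; exact (hasDerivAt_logGamma hb).deriv
  have h1 := Real.convexOn_log_Gamma.deriv_le_slope (mem_Ioi.mpr ha) (mem_Ioi.mpr hb) hab
    (by rw [Function.comp_def]; exact (hasDerivAt_logGamma ha).differentiableAt)
  have h2 := Real.convexOn_log_Gamma.slope_le_deriv (mem_Ioi.mpr ha) (mem_Ioi.mpr hb) hab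
    (by rw [Function.comp_def]; exact (hasDerivAt_logGamma hb).differentiableAt)
  rw [hda] at h1; rw [hdb] at h2; linarith

lemma psi_rec {t : ℝ} (ht : 0 < t) : psi (t + 1) = t⁻¹ + psi t := by
  have h1 : HasDerivAt (fun x : ℝ => Real.log (Real.Gamma (x + 1))) (psi (t + 1)) t := by
    simpa [Function.comp_def] using (hasDerivAt_logGamma (by linarith : (0:ℝ) < t + 1)).comp t
      ((hasDerivAt_id t).add_const 1)
  have h2 : HasDerivAt (fun x : ℝ => Real.log x + Real.log (Real.Gamma x)) (t⁻¹ + psi t) t :=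
    (Real.hasDerivAt_log ht.ne').add (hasDerivAt_logGamma ht)
  have heq : (fun x : ℝ => Real.log (Real.Gamma (x + 1))) =ᶠ[𝓝 t]
      (fun x : ℝ => Real.log x + Real.log (Real.Gamma x)) := by
    filter_upwards [eventually_gt_nhds ht] with x hx
    rw [Real.Gamma_add_one hx.ne', Real.log_mul hx.ne' (Real.Gamma_pos_of_pos hx).ne']
  exact ((h2.congr_of_eventuallyEq heq).unique h1).symm

noncomputable def cc (k : ℕ) : ℝ :=
  ((bernoulli (2*k) : ℚ) : ℝ) / ((2*(k:ℝ)) * (2*(k:ℝ) - 1))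

lemma cc_ne_zero {n : ℕ} (hn : 1 ≤ n) : cc n ≠ 0 := by
  have hb : ((bernoulli (2*n) : ℚ) : ℝ) ≠ 0 := by
    intro h
    have hs := hasSum_zeta_nat (k := n) (by omega)
    rw [h] at hs
    simp only [mul_zero, zero_div] at hs
    have h1 : (1 : ℝ) ≤ 0 := by
      have := le_hasSum hs 1 (fun j _ => by positivity)
      simpa using this
    linarith
  have h1 : (2*(n:ℝ)) * (2*(n:ℝ) - 1) ≠ 0 := by
    have : (1:ℝ) ≤ (n:ℝ) := by exact_mod_cast hn
    nlinarith
  exact div_ne_zero hb h1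

lemma R_eq {n : ℕ} (hn : 1 ≤ n) {t : ℝ} (ht : 0 < t) :
    R n t = (-1:ℝ)^n * (Real.log (Real.Gamma (t+1)) - Real.log t - (t - 1/2) * Real.log t
      + t - (1/2) * Real.log (2*π)
      - (∑ k ∈ Finset.Icc 1 n, cc k * t ^ (2*(n-k))) / t ^ (2*n-1)) := by
  have hlog : Real.log (Real.Gamma t) = Real.log (Real.Gamma (t+1)) - Real.log t := by
    rw [Real.Gamma_add_one ht.ne', Real.log_mul ht.ne' (Real.Gamma_pos_of_pos ht).ne']; ring
  have hsum : ∑ k ∈ Finset.Icc 1 n,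
      ((bernoulli (2*k) : ℚ) : ℝ) / ((2*(k:ℝ)) * (2*(k:ℝ) - 1)) * t ^ (1 - 2*(k:ℤ))
      = (∑ k ∈ Finset.Icc 1 n, cc k * t ^ (2*(n-k))) / t ^ (2*n-1) := by
    rw [Finset.sum_div]
    refine Finset.sum_congr rfl fun k hk => ?_
    obtain ⟨hk1, hk2⟩ := Finset.mem_Icc.mp hk
    rw [cc, mul_div_assoc]
    congr 1
    rw [eq_div_iff (pow_ne_zero _ ht.ne'), ← zpow_natCast t (2*(n-k)), ← zpow_natCast t (2*n-1),
      ← zpow_add₀ ht.ne']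
    congr 1
    push_cast
    omega
  rw [R, hlog, hsum]

lemma deriv_R_eq {n : ℕ} (hn : 1 ≤ n) {t : ℝ} (ht : 0 < t) :
    deriv (R n) t = (-1:ℝ)^n * (psi (t+1) - t⁻¹ - (Real.log t + (t - 1/2) * t⁻¹) + 1
      - (∑ k ∈ Finset.Icc 1 n, cc k * (1 - 2*(k:ℝ)) * t ^ (2*(n-k))) / t ^ (2*n)) := by
  refine HasDerivAt.deriv ?_
  have hsum : HasDerivAt (fun x : ℝ => ∑ k ∈ Finset.Icc 1 n,
      ((bernoulli (2*k) : ℚ) : ℝ) / ((2*(k:ℝ)) * (2*(k:ℝ) - 1)) * x ^ (1 - 2*(k:ℤ)))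
      ((∑ k ∈ Finset.Icc 1 n, cc k * (1 - 2*(k:ℝ)) * t ^ (2*(n-k))) / t ^ (2*n)) t := by
    rw [Finset.sum_div]
    refine HasDerivAt.fun_sum fun k hk => ?_
    obtain ⟨hk1, hk2⟩ := Finset.mem_Icc.mp hk
    have he : (t:ℝ) ^ (1 - 2*(k:ℤ) - 1) = t ^ (2*(n-k)) / t ^ (2*n) := by
      rw [eq_div_iff (pow_ne_zero _ ht.ne'), ← zpow_natCast t (2*(n-k)), ← zpow_natCast t (2*n),
        ← zpow_add₀ ht.ne']
      congr 1
      push_cast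
      omega
    have h := (hasDerivAt_zpow (1 - 2*(k:ℤ)) t (Or.inl ht.ne')).const_mul
      (((bernoulli (2*k) : ℚ) : ℝ) / ((2*(k:ℝ)) * (2*(k:ℝ) - 1)))
    rw [he] at h
    convert h using 1
    · rfl
    rw [cc]
    push_cast
    ring
  have h1 : HasDerivAt (fun x => Real.log (Real.Gamma x)) (psi (t+1) - t⁻¹) t := by
    have h := hasDerivAt_logGamma ht
    rwa [show psi t = psi (t+1) - t⁻¹ by rw [psi_rec ht]; ring] at h
  have h2 : HasDerivAt (fun x : ℝ => (x - 1/2) * Real.log x)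
      (Real.log t + (t - 1/2) * t⁻¹) t := by
    have h := ((hasDerivAt_id t).sub_const (1/2:ℝ)).mul (Real.hasDerivAt_log ht.ne')
    simpa [Pi.mul_def] using h
  have h3 := ((((h1.sub h2).add (hasDerivAt_id t)).sub_const
      ((1/2) * Real.log (2*π))).sub hsum).const_mul ((-1:ℝ)^n)
  unfold R
  exact h3

theorem stmt6 (n : ℕ) (hn : 1 ≤ n) :
    Filter.Tendsto (fun t : ℝ => -(t * deriv (R n) t) / R n t)
      (nhdsWithin 0 (Set.Ioi 0)) (nhds (2*(n:ℝ) - 1)) := by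
  have hc := cc_ne_zero hn
  obtain ⟨m, hm1, hm2⟩ : ∃ m, 2*n-1 = m ∧ 2*n = m+1 := ⟨2*n-1, rfl, by omega⟩
  have hmpos : 1 ≤ m := by omega
  -- basic limits
  have hA : Tendsto (fun t : ℝ => t^m) (𝓝[>](0:ℝ)) (𝓝 0) := by
    refine Tendsto.mono_left ?_ nhdsWithin_le_nhds
    simpa [zero_pow (by omega : m ≠ 0)] using (continuous_pow m).tendsto (0:ℝ)
  have hA1 : Tendsto (fun t : ℝ => t^(m+1)) (𝓝[>](0:ℝ)) (𝓝 0) := by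
    refine Tendsto.mono_left ?_ nhdsWithin_le_nhds
    simpa [zero_pow (by omega : m+1 ≠ 0)] using (continuous_pow (m+1)).tendsto (0:ℝ)
  have l1 : Tendsto (fun t : ℝ => t^m * Real.log (Real.Gamma (t+1))) (𝓝[>](0:ℝ)) (𝓝 0) := by
    have h1 : ContinuousAt Real.Gamma (1:ℝ) := (diffGamma one_pos).continuousAt
    have h2 : Tendsto (fun t : ℝ => t+1) (𝓝[>](0:ℝ)) (𝓝 (1:ℝ)) := by
      refine Tendsto.mono_left ?_ nhdsWithin_le_nhds
      simpa [Pi.add_def] using (continuous_id.add continuous_const).tendsto (0:ℝ)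
    have h3 : Tendsto (fun t : ℝ => Real.Gamma (t+1)) (𝓝[>](0:ℝ)) (𝓝 (1:ℝ)) := by
      have := h1.tendsto.comp h2
      rwa [Real.Gamma_one] at this
    have hB : Tendsto (fun t : ℝ => Real.log (Real.Gamma (t+1))) (𝓝[>](0:ℝ)) (𝓝 0) := by
      have := (Real.continuousAt_log one_ne_zero).tendsto.comp h3
      simpa [Function.comp_def] using this
    simpa using hA.mul hB
  have l2 : Tendsto (fun t : ℝ => t^m * Real.log t) (𝓝[>](0:ℝ)) (𝓝 0) := by
    have h := tendsto_log_mul_rpow_nhdsGT_zero (show (0:ℝ) < (m:ℝ) by exact_mod_cast hmpos)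
    refine Tendsto.congr' ?_ h
    filter_upwards [self_mem_nhdsWithin] with t ht
    rw [Real.rpow_natCast, mul_comm]
  have l3 : Tendsto (fun t : ℝ => t^(m+1) * psi (t+1)) (𝓝[>](0:ℝ)) (𝓝 0) := by
    set M := max |psi 1| |psi 2| with hM
    have hbd : ∀ᶠ t : ℝ in 𝓝[>](0:ℝ), ‖t^(m+1) * psi (t+1)‖ ≤ M * t^(m+1) := by
      filter_upwards [Ioo_mem_nhdsGT_of_mem (by norm_num : (0:ℝ) ∈ Ico (0:ℝ) 1)] with t ht
      obtain ⟨ht0, ht1⟩ := ht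
      have h1 : psi 1 ≤ psi (t+1) := psi_mono one_pos (by linarith)
      have h2 : psi (t+1) ≤ psi 2 := psi_mono (by linarith) (by linarith)
      have habs : |psi (t+1)| ≤ M := by
        rw [abs_le]
        constructor
        · have := neg_abs_le (psi 1)
          have h3 : -M ≤ -|psi 1| := neg_le_neg (le_max_left _ _)
          linarith
        · have := le_abs_self (psi 2)
          have h3 : |psi 2| ≤ M := le_max_right _ _
          linarith
      have hpow : (0:ℝ) ≤ t^(m+1) := le_of_lt (pow_pos ht0 _)
      calc ‖t^(m+1) * psi (t+1)‖ = t^(m+1) * |psi (t+1)| := by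
            rw [norm_mul, Real.norm_eq_abs, Real.norm_eq_abs, abs_of_nonneg hpow]
        _ ≤ t^(m+1) * M := mul_le_mul_of_nonneg_left habs hpow
        _ = M * t^(m+1) := mul_comm _ _
    have hg : Tendsto (fun t : ℝ => M * t^(m+1)) (𝓝[>](0:ℝ)) (𝓝 0) := by
      simpa using hA1.const_mul M
    exact squeeze_zero_norm' hbd hg
  have lS1 : Tendsto (fun t : ℝ => ∑ k ∈ Finset.Icc 1 n, cc k * t^(2*(n-k)))
      (𝓝[>](0:ℝ)) (𝓝 (cc n)) := by
    have hcont : Continuous (fun t : ℝ => ∑ k ∈ Finset.Icc 1 n, cc k * t^(2*(n-k))) :=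
      continuous_finset_sum _ fun k _ => continuous_const.mul (continuous_pow _)
    have h : Tendsto (fun t : ℝ => ∑ k ∈ Finset.Icc 1 n, cc k * t^(2*(n-k))) (𝓝[>](0:ℝ))
        (𝓝 (∑ k ∈ Finset.Icc 1 n, cc k * (0:ℝ)^(2*(n-k)))) :=
      Tendsto.mono_left (hcont.tendsto 0) nhdsWithin_le_nhds
    have hval : ∑ k ∈ Finset.Icc 1 n, cc k * (0:ℝ)^(2*(n-k)) = cc n := by
      rw [Finset.sum_eq_single_of_mem n (Finset.mem_Icc.mpr ⟨hn, le_rfl⟩)]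
      · simp
      · intro k hk hkn
        obtain ⟨h1, h2⟩ := Finset.mem_Icc.mp hk
        rw [zero_pow (by omega), mul_zero]
    rwa [hval] at h
  have lS2 : Tendsto (fun t : ℝ => ∑ k ∈ Finset.Icc 1 n, cc k * (1 - 2*(k:ℝ)) * t^(2*(n-k)))
      (𝓝[>](0:ℝ)) (𝓝 (cc n * (1 - 2*(n:ℝ)))) := by
    have hcont : Continuous
        (fun t : ℝ => ∑ k ∈ Finset.Icc 1 n, cc k * (1 - 2*(k:ℝ)) * t^(2*(n-k))) :=
      continuous_finset_sum _ fun k _ => continuous_const.mul (continuous_pow _)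
    have h : Tendsto (fun t : ℝ => ∑ k ∈ Finset.Icc 1 n, cc k * (1 - 2*(k:ℝ)) * t^(2*(n-k)))
        (𝓝[>](0:ℝ)) (𝓝 (∑ k ∈ Finset.Icc 1 n, cc k * (1 - 2*(k:ℝ)) * (0:ℝ)^(2*(n-k)))) :=
      Tendsto.mono_left (hcont.tendsto 0) nhdsWithin_le_nhds
    have hval : ∑ k ∈ Finset.Icc 1 n, cc k * (1 - 2*(k:ℝ)) * (0:ℝ)^(2*(n-k))
        = cc n * (1 - 2*(n:ℝ)) := by
      rw [Finset.sum_eq_single_of_mem n (Finset.mem_Icc.mpr ⟨hn, le_rfl⟩)]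
      · simp
      · intro k hk hkn
        obtain ⟨h1, h2⟩ := Finset.mem_Icc.mp hk
        rw [zero_pow (by omega), mul_zero]
    rwa [hval] at h
  have hT : Tendsto (fun t : ℝ => t - 1/2) (𝓝[>](0:ℝ)) (𝓝 (-(1/2))) := by
    refine Tendsto.mono_left ?_ nhdsWithin_le_nhds
    simpa [Pi.sub_def] using (continuous_id.sub continuous_const).tendsto (0:ℝ)
  have hid : Tendsto (fun t : ℝ => t) (𝓝[>](0:ℝ)) (𝓝 0) := by
    refine Tendsto.mono_left ?_ nhdsWithin_le_nhds
    exact continuous_id.tendsto (0:ℝ)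
  -- main pieces
  have hGlim : Tendsto (fun t : ℝ => (-1:ℝ)^n *
      (t^m * Real.log (Real.Gamma (t+1)) - t^m * Real.log t
        - (t - 1/2) * (t^m * Real.log t) + t^(m+1) - (1/2) * Real.log (2*π) * t^m
        - ∑ k ∈ Finset.Icc 1 n, cc k * t^(2*(n-k))))
      (𝓝[>](0:ℝ)) (𝓝 ((-1:ℝ)^n * -(cc n))) := by
    refine Tendsto.const_mul _ ?_
    have h := ((((l1.sub l2).sub (hT.mul l2)).add hA1).sub
      (hA.const_mul ((1/2) * Real.log (2*π)))).sub lS1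
    have h' : Tendsto (fun x : ℝ =>
        x^m * Real.log (Real.Gamma (x+1)) - x^m * Real.log x
          - (x - 1/2) * (x^m * Real.log x) + x^(m+1) - (1/2) * Real.log (2*π) * x^m
          - ∑ k ∈ Finset.Icc 1 n, cc k * x^(2*(n-k))) (𝓝[>](0:ℝ)) (𝓝 (-(cc n))) := by
      convert h using 2
      norm_num
    exact h'.congr (fun t => rfl)
  have hHlim : Tendsto (fun t : ℝ => (-1:ℝ)^n *
      (t^(m+1) * psi (t+1) - t^m - t * (t^m * Real.log t) - t^m * (t - 1/2) + t^(m+1)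
        - ∑ k ∈ Finset.Icc 1 n, cc k * (1 - 2*(k:ℝ)) * t^(2*(n-k))))
      (𝓝[>](0:ℝ)) (𝓝 ((-1:ℝ)^n * (cc n * (2*(n:ℝ) - 1)))) := by
    refine Tendsto.const_mul _ ?_
    have h := ((((l3.sub hA).sub (hid.mul l2)).sub (hA.mul hT)).add hA1).sub lS2
    have h' : Tendsto (fun x : ℝ =>
        x^(m+1) * psi (x+1) - x^m - x * (x^m * Real.log x) - x^m * (x - 1/2) + x^(m+1)
          - ∑ k ∈ Finset.Icc 1 n, cc k * (1 - 2*(k:ℝ)) * x^(2*(n-k))) (𝓝[>](0:ℝ))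
        (𝓝 (cc n * (2*(n:ℝ) - 1))) := by
      convert h using 2
      ring
    exact h'.congr (fun t => rfl)
  have hne : (-1:ℝ)^n * -(cc n) ≠ 0 := by
    apply mul_ne_zero
    · exact pow_ne_zero _ (by norm_num)
    · exact neg_ne_zero.mpr hc
  have hdiv := (hHlim.neg).div hGlim hne
  refine Tendsto.congr' ?_ (by convert hdiv using 2; rw [eq_div_iff hne]; ring)
  filter_upwards [self_mem_nhdsWithin] with t ht
  have ht0 : (0:ℝ) < t := ht
  have hGt : (-1:ℝ)^n *
      (t^m * Real.log (Real.Gamma (t+1)) - t^m * Real.log t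
        - (t - 1/2) * (t^m * Real.log t) + t^(m+1) - (1/2) * Real.log (2*π) * t^m
        - ∑ k ∈ Finset.Icc 1 n, cc k * t^(2*(n-k))) = t^m * R n t := by
    rw [R_eq hn ht0, hm1]
    field_simp
    ring
  have hHt : (-1:ℝ)^n *
      (t^(m+1) * psi (t+1) - t^m - t * (t^m * Real.log t) - t^m * (t - 1/2) + t^(m+1)
        - ∑ k ∈ Finset.Icc 1 n, cc k * (1 - 2*(k:ℝ)) * t^(2*(n-k)))
      = t^m * (t * deriv (R n) t) := by
    rw [deriv_R_eq hn ht0, hm2]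
    field_simp
    ring
  simp only [Pi.div_apply]
  rw [hGt, hHt, ← mul_neg, mul_div_mul_left _ _ (pow_ne_zero m (ne_of_gt ht0))]
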